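/- arXiv:2406.16226 — 4 statements merged into one kernel-verified Lean document; each statement's English description precedes it below -/
import Mathlib

section
/- Let Ω ⊂ ℝᴺ be a bounded open set, ε > 0, Ξ_ε = {ξ ∈ ℤᴺ : ε(ξ + Y) ⊂ Ω}, Ω̂_ε = int(⋃_{ξ ∈ Ξ_ε} ε(ξ + cl Y)) and Λ_ε = Ω \ Ω̂_ε. Then the Lebesgue measure of Λ_ε tends to 0 as ε → 0. -/
open MeasureTheory Filter Set Topology

noncomputable section

def IsYoung (B : ℝ → ℝ) : Prop :=
  ContinuousOn B (Set.Ici 0) ∧ ConvexOn ℝ (Set.Ici 0) B ∧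
  (∀ t : ℝ, 0 ≤ t → 0 ≤ B t) ∧ (∀ t : ℝ, 0 < t → 0 < B t) ∧
  Tendsto (fun t => B t / t) (𝓝[>] (0:ℝ)) (𝓝 0) ∧
  Tendsto (fun t => B t / t) atTop atTop

def youngConj (B : ℝ → ℝ) (t : ℝ) : ℝ := sSup ((fun s => s * t - B s) '' Set.Ici 0)

def unitCell (N : ℕ) : Set (Fin N → ℝ) := Set.univ.pi fun _ => Set.Ioo (0:ℝ) 1

def cellOf {N : ℕ} (ε : ℝ) (ξ : Fin N → ℤ) : Set (Fin N → ℝ) :=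
  {x | ∀ i, x i ∈ Set.Ioo (ε * (ξ i : ℝ)) (ε * ((ξ i : ℝ) + 1))}

def bigXi {N : ℕ} (ε : ℝ) (Ω : Set (Fin N → ℝ)) : Set (Fin N → ℤ) := {ξ | cellOf ε ξ ⊆ Ω}

def hatOmega {N : ℕ} (ε : ℝ) (Ω : Set (Fin N → ℝ)) : Set (Fin N → ℝ) :=
  interior (⋃ ξ ∈ bigXi ε Ω, closure (cellOf ε ξ))

def lamEps {N : ℕ} (ε : ℝ) (Ω : Set (Fin N → ℝ)) : Set (Fin N → ℝ) := Ω \ hatOmega ε Ω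

open Classical in
def unfold {N : ℕ} (ε : ℝ) (Ω : Set (Fin N → ℝ)) (φ : (Fin N → ℝ) → ℝ)
    (x y : Fin N → ℝ) : ℝ :=
  if x ∈ hatOmega ε Ω then φ (fun i => ε * ((⌊x i / ε⌋ : ℝ) + y i)) else 0

/-- Luxemburg norm of `u` with respect to the Young function `B` and the measure `μ`. -/
def luxNorm {α : Type*} [MeasurableSpace α] (μ : MeasureTheory.Measure α) (B : ℝ → ℝ)
    (u : α → ℝ) : ℝ :=
  sInf {k : ℝ | 0 < k ∧ ∫⁻ x, ENNReal.ofReal (B (|u x| / k)) ∂μ ≤ 1}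

lemma mem_closure_cellOf {N : ℕ} {ε : ℝ} (hε : 0 < ε) (y : Fin N → ℝ) :
    y ∈ closure (cellOf ε (fun i => ⌊y i / ε⌋)) := by
  have : cellOf ε (fun i => ⌊y i / ε⌋)
      = Set.univ.pi fun i => Set.Ioo (ε * (⌊y i / ε⌋ : ℝ)) (ε * ((⌊y i / ε⌋ : ℝ) + 1)) := by
    ext x; simp [cellOf, Set.mem_pi]
  rw [this, closure_pi_set]
  intro i _
  have h1 : (⌊y i / ε⌋ : ℝ) ≤ y i / ε := Int.floor_le _
  have h2 : y i / ε < (⌊y i / ε⌋ : ℝ) + 1 := Int.lt_floor_add_one _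
  have hab : ε * (⌊y i / ε⌋ : ℝ) < ε * ((⌊y i / ε⌋ : ℝ) + 1) := by nlinarith
  simp only [Function.comp, closure_Ioo hab.ne]
  constructor
  · calc ε * (⌊y i / ε⌋ : ℝ) ≤ ε * (y i / ε) := by nlinarith
      _ = y i := by field_simp
  · calc y i = ε * (y i / ε) := by field_simp
      _ ≤ ε * ((⌊y i / ε⌋ : ℝ) + 1) := by nlinarith

lemma mem_hatOmega_of_closedBall {N : ℕ} {ε : ℝ} (hε : 0 < ε) {Ω : Set (Fin N → ℝ)}
    {x : Fin N → ℝ} (h : Metric.closedBall x (2 * ε) ⊆ Ω) : x ∈ hatOmega ε Ω := by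
  rw [hatOmega, mem_interior]
  refine ⟨Metric.ball x ε, ?_, Metric.isOpen_ball, Metric.mem_ball_self hε⟩
  intro y hy
  have hyx : dist y x < ε := Metric.mem_ball.mp hy
  refine Set.mem_biUnion (show (fun i => ⌊y i / ε⌋) ∈ bigXi ε Ω from ?_)
    (mem_closure_cellOf hε y)
  intro z hz
  apply h
  rw [Metric.mem_closedBall, dist_pi_le_iff (by positivity)]
  intro i
  have hyi : dist (y i) (x i) < ε := lt_of_le_of_lt (dist_le_pi_dist y x i) hyx
  rw [Real.dist_eq, abs_lt] at hyi
  have h1 : (⌊y i / ε⌋ : ℝ) ≤ y i / ε := Int.floor_le _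
  have h2 : y i / ε < (⌊y i / ε⌋ : ℝ) + 1 := Int.lt_floor_add_one _
  have he1 : ε * (⌊y i / ε⌋ : ℝ) ≤ y i := by
    calc ε * (⌊y i / ε⌋ : ℝ) ≤ ε * (y i / ε) := by nlinarith
      _ = y i := by field_simp
  have he2 : y i ≤ ε * ((⌊y i / ε⌋ : ℝ) + 1) := by
    calc y i = ε * (y i / ε) := by field_simp
      _ ≤ ε * ((⌊y i / ε⌋ : ℝ) + 1) := by nlinarith
  have hz1 := (hz i).1
  have hz2 := (hz i).2
  rw [Real.dist_eq, abs_le]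
  constructor <;> nlinarith

/-- The Lebesgue measure of the boundary layer `Λ_ε = Ω \ Ω̂_ε` tends to `0` as `ε → 0⁺`. -/
theorem measure_lamEps_tendsto_zero (N : ℕ) (Ω : Set (Fin N → ℝ))
    (hΩopen : IsOpen Ω) (hΩbdd : Bornology.IsBounded Ω)
    (hfr : MeasureTheory.volume (frontier Ω) = 0) :
    Tendsto (fun ε : ℝ => MeasureTheory.volume (lamEps ε Ω)) (𝓝[>] (0:ℝ)) (𝓝 0) := by
  by_cases hc : Ωᶜ = ∅
  · -- Ω = univ : lamEps is empty for ε > 0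
    have hΩu : Ω = univ := by rwa [compl_empty_iff] at hc
    have : ∀ᶠ ε in 𝓝[>] (0:ℝ), MeasureTheory.volume (lamEps ε Ω) = 0 := by
      filter_upwards [self_mem_nhdsWithin] with ε (hε : 0 < ε)
      have : lamEps ε Ω = ∅ := by
        rw [lamEps, diff_eq_empty]
        intro x _
        exact mem_hatOmega_of_closedBall hε (by rw [hΩu]; exact subset_univ _)
      simp [this]
    exact Tendsto.congr' (this.mono fun ε h => h.symm) tendsto_const_nhds
  · have hcne : Ωᶜ.Nonempty := nonempty_iff_ne_empty.mpr hc
    -- the boundary layer sets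
    set S : ℝ → Set (Fin N → ℝ) := fun ε => Ω ∩ {x | Metric.infDist x Ωᶜ ≤ 2 * ε} with hS
    have hsub : ∀ ε : ℝ, 0 < ε → lamEps ε Ω ⊆ S ε := by
      intro ε hε x hx
      refine ⟨hx.1, ?_⟩
      simp only [mem_setOf_eq]
      by_contra hlt
      push_neg at hlt
      have hball : Metric.closedBall x (2 * ε) ⊆ Ω := by
        intro y hy
        by_contra hyΩ
        have : Metric.infDist x Ωᶜ ≤ dist x y := Metric.infDist_le_dist_of_mem hyΩ
        rw [Metric.mem_closedBall] at hy
        rw [dist_comm] at hy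
        exact absurd (this.trans hy) (not_le.mpr hlt)
      exact hx.2 (mem_hatOmega_of_closedBall hε hball)
    have hSmono : ∀ ε₁ ε₂ : ℝ, ε₁ ≤ ε₂ → S ε₁ ⊆ S ε₂ := by
      intro ε₁ ε₂ h x hx
      refine ⟨hx.1, ?_⟩
      have := hx.2
      simp only [mem_setOf_eq] at this ⊢
      linarith
    -- intersection over 1/(n+1) is empty
    have hiInter : (⋂ n : ℕ, S (1 / (n + 1))) = ∅ := by
      rw [eq_empty_iff_forall_notMem]
      intro x hx
      rw [mem_iInter] at hx
      have hx0 : x ∈ Ω := (hx 0).1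
      have hle : ∀ n : ℕ, Metric.infDist x Ωᶜ ≤ 2 * (1 / ((n:ℝ) + 1)) := fun n => (hx n).2
      have hzero : Metric.infDist x Ωᶜ ≤ 0 := by
        have ht : Tendsto (fun n : ℕ => 2 * (1 / ((n:ℝ) + 1))) atTop (𝓝 (2 * 0)) :=
          tendsto_one_div_add_atTop_nhds_zero_nat.const_mul 2
        rw [mul_zero] at ht
        exact ge_of_tendsto' ht hle
      have hzero' : Metric.infDist x Ωᶜ = 0 := le_antisymm hzero Metric.infDist_nonneg
      have hxcl : x ∈ closure Ωᶜ := (Metric.mem_closure_iff_infDist_zero hcne).mpr hzero'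
      rw [hΩopen.isClosed_compl.closure_eq] at hxcl
      exact hxcl hx0
    -- measure of S(1/(n+1)) tends to 0
    have hmeas : ∀ n : ℕ, NullMeasurableSet (S (1 / (n + 1))) volume := by
      intro n
      exact ((hΩopen.measurableSet.inter
        (isClosed_le (Metric.continuous_infDist_pt _) continuous_const).measurableSet)).nullMeasurableSet
    have hanti : Antitone fun n : ℕ => S (1 / (n + 1)) := by
      intro m n hmn
      apply hSmono
      apply one_div_le_one_div_of_le (by positivity)
      exact_mod_cast by omega
    have hfin : ∃ n : ℕ, volume (S (1 / (n + 1))) ≠ ⊤ := by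
      refine ⟨0, ?_⟩
      have : volume (S (1 / ((0:ℕ) + 1))) ≤ volume Ω := measure_mono (inter_subset_left)
      exact (lt_of_le_of_lt this hΩbdd.measure_lt_top).ne
    have htend : Tendsto (fun n : ℕ => volume (S (1 / (n + 1)))) atTop (𝓝 0) := by
      have := tendsto_measure_iInter_atTop hmeas hanti hfin
      rw [hiInter] at this
      simpa [Function.comp_def] using this
    -- conclude
    rw [ENNReal.tendsto_nhds_zero]
    intro δ hδ
    rcases (ENNReal.tendsto_nhds_zero.mp htend δ hδ).exists with ⟨n, hn⟩
    have hmem : Set.Ioo (0:ℝ) (1 / (n + 1)) ∈ 𝓝[>] (0:ℝ) :=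
      Ioo_mem_nhdsGT_of_mem ⟨le_refl _, by positivity⟩
    filter_upwards [hmem] with ε hε
    calc volume (lamEps ε Ω) ≤ volume (S ε) := measure_mono (hsub ε hε.1)
      _ ≤ volume (S (1 / (n + 1))) := measure_mono (hSmono _ _ hε.2.le)
      _ ≤ δ := hn
end
end

section
/- Let B be a Young function, Ω ⊂ ℝᴺ bounded open, ε > 0, and T_ε the unfolding operator. Then for every w ∈ L^B(Ω): (1/|Y|) ∫_{Ω×Y} B(|T_ε(w)(x,y)|) dx dy = ∫_{Ω̂_ε} B(|w(x)|) dx = ∫_Ω B(|w|) dx − ∫_{Λ_ε} B(|w|) dx; in particular (1/|Y|) ∫_{Ω×Y} B(|T_ε(w)|) dx dy ≤ ∫_Ω B(|w|) dx. -/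
open MeasureTheory Filter Set Topology

noncomputable section

namespace UIH

variable {N : ℕ} {ε : ℝ} {ξ η : Fin N → ℤ}

lemma cell_eq_pi (ε : ℝ) (ξ : Fin N → ℤ) :
    cellOf ε ξ = Set.pi Set.univ fun i => Set.Ioo (ε * (ξ i : ℝ)) (ε * ((ξ i : ℝ) + 1)) := by
  ext x; simp [cellOf, Set.mem_pi]

lemma isOpen_cell (ε : ℝ) (ξ : Fin N → ℤ) : IsOpen (cellOf ε ξ) := by
  rw [cell_eq_pi]
  exact isOpen_set_pi Set.finite_univ fun i _ => isOpen_Ioo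

lemma measurableSet_cell (ε : ℝ) (ξ : Fin N → ℤ) : MeasurableSet (cellOf ε ξ) :=
  (isOpen_cell ε ξ).measurableSet

lemma measurableSet_unitCell (N : ℕ) : MeasurableSet (unitCell N) :=
  MeasurableSet.univ_pi fun _ => measurableSet_Ioo

lemma volume_unitCell (N : ℕ) : volume (unitCell N) = 1 := by
  rw [unitCell, volume_pi_pi]
  simp

lemma volume_cell (hε : 0 < ε) (ξ : Fin N → ℤ) :
    volume (cellOf ε ξ) = ENNReal.ofReal (ε ^ N) := by
  rw [cell_eq_pi, volume_pi_pi]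
  have : ∀ i : Fin N, volume (Set.Ioo (ε * (ξ i : ℝ)) (ε * ((ξ i : ℝ) + 1)))
      = ENNReal.ofReal ε := by
    intro i; rw [Real.volume_Ioo]; ring_nf
  simp only [this, Finset.prod_const, Finset.card_univ, Fintype.card_fin,
    ENNReal.ofReal_pow hε.le]

lemma volume_closure_cell_diff (hε : 0 < ε) (ξ : Fin N → ℤ) :
    volume (closure (cellOf ε ξ) \ cellOf ε ξ) = 0 := by
  have hlt : ∀ i : Fin N, ε * (ξ i : ℝ) < ε * ((ξ i : ℝ) + 1) := fun i => by
    nlinarith [hε]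
  have hcl : closure (cellOf ε ξ)
      = Set.pi Set.univ fun i => Set.Icc (ε * (ξ i : ℝ)) (ε * ((ξ i : ℝ) + 1)) := by
    rw [cell_eq_pi, closure_pi_set]
    exact Set.pi_congr rfl fun i _ => closure_Ioo (hlt i).ne
  have h1 : volume (closure (cellOf ε ξ)) = ENNReal.ofReal (ε ^ N) := by
    rw [hcl, volume_pi_pi]
    have : ∀ i : Fin N, volume (Set.Icc (ε * (ξ i : ℝ)) (ε * ((ξ i : ℝ) + 1)))
        = ENNReal.ofReal ε := by
      intro i; rw [Real.volume_Icc]; ring_nf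
    simp only [this, Finset.prod_const, Finset.card_univ, Fintype.card_fin,
      ENNReal.ofReal_pow hε.le]
  rw [measure_diff subset_closure (measurableSet_cell ε ξ).nullMeasurableSet
    (by rw [volume_cell hε]; exact ENNReal.ofReal_ne_top),
    h1, volume_cell hε, tsub_self]

lemma disjoint_cells (hε : 0 < ε) (hne : ξ ≠ η) : Disjoint (cellOf ε ξ) (cellOf ε η) := by
  rw [Set.disjoint_left]
  intro x hx hx'
  obtain ⟨i, hi⟩ := Function.ne_iff.mp hne
  rcases lt_or_gt_of_ne hi with h | h
  · have h1 : (ξ i : ℝ) + 1 ≤ (η i : ℝ) := by exact_mod_cast Int.lt_iff_add_one_le.mp h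
    have := (hx i).2
    have := (hx' i).1
    nlinarith [mul_le_mul_of_nonneg_left h1 hε.le]
  · have h1 : (η i : ℝ) + 1 ≤ (ξ i : ℝ) := by exact_mod_cast Int.lt_iff_add_one_le.mp h
    have := (hx' i).2
    have := (hx i).1
    nlinarith [mul_le_mul_of_nonneg_left h1 hε.le]

lemma floor_of_mem_cell (hε : 0 < ε) {x : Fin N → ℝ} (hx : x ∈ cellOf ε ξ) (i : Fin N) :
    ⌊x i / ε⌋ = ξ i := by
  have h1 := (hx i).1
  have h2 := (hx i).2
  rw [Int.floor_eq_iff]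
  constructor
  · rw [le_div_iff₀ hε]; nlinarith
  · rw [div_lt_iff₀ hε]; push_cast; nlinarith

lemma mem_unitCell_iff (hε : 0 < ε) (ξ : Fin N → ℤ) (y : Fin N → ℝ) :
    (fun i => ε * ((ξ i : ℝ) + y i)) ∈ cellOf ε ξ ↔ y ∈ unitCell N := by
  simp only [cellOf, Set.mem_setOf_eq, Set.mem_Ioo, unitCell, Set.mem_pi, Set.mem_univ,
    forall_true_left, true_implies]
  refine forall_congr' fun i => ?_
  rw [mul_lt_mul_iff_right₀ hε, mul_lt_mul_iff_right₀ hε]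
  constructor
  · rintro ⟨h1, h2⟩; exact ⟨by linarith, by linarith⟩
  · rintro ⟨h1, h2⟩; exact ⟨by linarith, by linarith⟩

lemma measurable_B_abs {B : ℝ → ℝ} (hB : ContinuousOn B (Set.Ici 0))
    {α : Type*} [MeasurableSpace α] {u : α → ℝ} (hu : Measurable u) :
    Measurable fun a => B |u a| := by
  have h2 : Continuous fun t : Set.Ici (0:ℝ) => B t :=
    continuousOn_iff_continuous_restrict.mp hB
  have h1 : Measurable fun a => (⟨|u a|, Set.mem_Ici.mpr (abs_nonneg _)⟩ : Set.Ici (0:ℝ)) :=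
    Measurable.subtype_mk hu.abs
  exact h2.measurable.comp h1

lemma young_zero {B : ℝ → ℝ} (hBc : ContinuousOn B (Set.Ici 0))
    (hlim : Tendsto (fun t => B t / t) (𝓝[>] (0:ℝ)) (𝓝 0)) : B 0 = 0 := by
  have h1 : Tendsto B (𝓝[>] (0:ℝ)) (𝓝 0) := by
    have hid : Tendsto (fun t : ℝ => t) (𝓝[>] (0:ℝ)) (𝓝 0) :=
      tendsto_id.mono_left nhdsWithin_le_nhds
    have h2 := hlim.mul hid
    rw [zero_mul] at h2
    refine h2.congr' ?_
    filter_upwards [self_mem_nhdsWithin] with t ht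
    exact div_mul_cancel₀ _ (ne_of_gt ht)
  have h2 : Tendsto B (𝓝[>] (0:ℝ)) (𝓝 (B 0)) := by
    have := (hBc 0 Set.self_mem_Ici).tendsto
    exact this.mono_left (nhdsWithin_mono _ Set.Ioi_subset_Ici_self)
  exact tendsto_nhds_unique h2 h1

lemma lintegral_comp_affine (hε : 0 < ε) (g : (Fin N → ℝ) → ENNReal) (hg : Measurable g)
    (a : Fin N → ℝ) :
    ∫⁻ y, g (a + ε • y) = ENNReal.ofReal ((ε ^ N)⁻¹) * ∫⁻ x, g x := by
  set L : (Fin N → ℝ) →ₗ[ℝ] (Fin N → ℝ) := ε • LinearMap.id with hL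
  have hdet : LinearMap.det L = ε ^ N := by
    rw [hL, LinearMap.det_smul, LinearMap.det_id, mul_one, Module.finrank_fin_fun]
  have hLmeas : Measurable fun y : Fin N → ℝ => ε • y := measurable_id.const_smul ε
  have hmap : Measure.map (fun y : Fin N → ℝ => a + ε • y) volume
      = ENNReal.ofReal ((ε ^ N)⁻¹) • volume := by
    have hco : (fun y : Fin N → ℝ => a + ε • y)
        = (fun z => a + z) ∘ (fun y : Fin N → ℝ => ε • y) := rfl
    rw [hco, ← Measure.map_map (measurable_const_add a) hLmeas]
    have hsm : Measure.map (fun y : Fin N → ℝ => ε • y) volume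
        = ENNReal.ofReal ((ε ^ N)⁻¹) • volume := by
      have h := Real.map_linearMap_volume_pi_eq_smul_volume_pi
        (f := L) (by rw [hdet]; positivity)
      have hLc : ⇑L = fun y : Fin N → ℝ => ε • y := rfl
      rw [hLc, hdet] at h
      rw [h, abs_of_pos (by positivity)]
    rw [hsm, Measure.map_smul, Measure.IsAddLeftInvariant.map_add_left_eq_self]
  calc ∫⁻ y, g (a + ε • y)
      = ∫⁻ x, g x ∂(Measure.map (fun y : Fin N → ℝ => a + ε • y) volume) :=
        (lintegral_map hg (measurable_const_add a |>.comp hLmeas)).symm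
    _ = ENNReal.ofReal ((ε ^ N)⁻¹) * ∫⁻ x, g x := by
        rw [hmap, lintegral_smul_measure, smul_eq_mul]

end UIH

namespace UIH2

open UIH

variable {N : ℕ} {ε : ℝ}

lemma setLIntegral_prod_snd {s t : Set (Fin N → ℝ)} (ht : MeasurableSet t)
    (G : (Fin N → ℝ) → ENNReal) (hG : Measurable G) :
    ∫⁻ p in s ×ˢ t, G p.2 = volume s * ∫⁻ y in t, G y := by
  rw [Measure.volume_eq_prod, ← Measure.prod_restrict,
    lintegral_prod (fun p => G p.2) ((hG.comp measurable_snd).aemeasurable)]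
  simp only [lintegral_const, Measure.restrict_apply_univ]
  rw [mul_comm]

lemma lintegral_unitCell_comp (hε : 0 < ε) (ξ : Fin N → ℤ) (g : (Fin N → ℝ) → ENNReal)
    (hg : Measurable g) :
    ∫⁻ y in unitCell N, g (fun i => ε * ((ξ i : ℝ) + y i))
      = ENNReal.ofReal ((ε ^ N)⁻¹) * ∫⁻ x in cellOf ε ξ, g x := by
  set a : Fin N → ℝ := fun i => ε * (ξ i : ℝ) with ha
  have hT : ∀ y : Fin N → ℝ, (fun i => ε * ((ξ i : ℝ) + y i)) = a + ε • y := by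
    intro y; funext i
    simp only [ha, Pi.add_apply, Pi.smul_apply, smul_eq_mul]
    ring
  have hind : ∀ y, (unitCell N).indicator (fun y => g (fun i => ε * ((ξ i : ℝ) + y i))) y
      = (cellOf ε ξ).indicator g (a + ε • y) := by
    intro y
    by_cases hy : y ∈ unitCell N
    · rw [Set.indicator_of_mem hy, ← hT y,
        Set.indicator_of_mem ((mem_unitCell_iff hε ξ y).mpr hy)]
    · rw [Set.indicator_of_notMem hy, ← hT y,
        Set.indicator_of_notMem (fun hmem => hy ((mem_unitCell_iff hε ξ y).mp hmem))]
  calc ∫⁻ y in unitCell N, g (fun i => ε * ((ξ i : ℝ) + y i))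
      = ∫⁻ y, (unitCell N).indicator (fun y => g (fun i => ε * ((ξ i : ℝ) + y i))) y :=
        (lintegral_indicator (measurableSet_unitCell N) _).symm
    _ = ∫⁻ y, (cellOf ε ξ).indicator g (a + ε • y) := by simp_rw [hind]
    _ = ENNReal.ofReal ((ε ^ N)⁻¹) * ∫⁻ x, (cellOf ε ξ).indicator g x :=
        lintegral_comp_affine hε _ (hg.indicator (measurableSet_cell ε ξ)) a
    _ = ENNReal.ofReal ((ε ^ N)⁻¹) * ∫⁻ x in cellOf ε ξ, g x := by
        rw [lintegral_indicator (measurableSet_cell ε ξ)]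

end UIH2


/-- Unfolded integral identities: `(1/|Y|) ∫_{Ω×Y} B(|T_ε w|) = ∫_{Ω̂_ε} B(|w|)
 = ∫_Ω B(|w|) − ∫_{Λ_ε} B(|w|) ≤ ∫_Ω B(|w|)`. -/
theorem unfold_integral_identity (N : ℕ) (B : ℝ → ℝ) (hB : IsYoung B)
    (Ω : Set (Fin N → ℝ)) (hΩopen : IsOpen Ω) (hΩbdd : Bornology.IsBounded Ω)
    (ε : ℝ) (hε : 0 < ε) (w : (Fin N → ℝ) → ℝ) (hw : Measurable w)
    (hwB : MeasureTheory.IntegrableOn (fun x => B |w x|) Ω) :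
    (1 / (MeasureTheory.volume (unitCell N)).toReal) *
        (∫ p in Ω ×ˢ unitCell N, B |unfold ε Ω w p.1 p.2|) =
      ∫ x in hatOmega ε Ω, B |w x| ∧
    (∫ x in hatOmega ε Ω, B |w x|) =
      (∫ x in Ω, B |w x|) - ∫ x in lamEps ε Ω, B |w x| ∧
    (1 / (MeasureTheory.volume (unitCell N)).toReal) *
        (∫ p in Ω ×ˢ unitCell N, B |unfold ε Ω w p.1 p.2|) ≤
      ∫ x in Ω, B |w x| := by
  classical
  obtain ⟨hBc, -, hBnn, -, hBlim, -⟩ := hB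
  have hB0 : B 0 = 0 := UIH.young_zero hBc hBlim
  set H := hatOmega ε Ω with hHdef
  set Y := unitCell N with hYdef
  have hHmeas : MeasurableSet H := isOpen_interior.measurableSet
  have hYmeas : MeasurableSet Y := UIH.measurableSet_unitCell N
  set U : Set (Fin N → ℝ) := ⋃ ξ ∈ bigXi ε Ω, cellOf ε ξ with hUdef
  have hUopen : IsOpen U := isOpen_biUnion fun ξ _ => UIH.isOpen_cell ε ξ
  have hUH : U ⊆ H := by
    refine interior_maximal ?_ hUopen
    exact Set.iUnion₂_mono fun ξ _ => subset_closure
  have hUΩ : U ⊆ Ω := Set.iUnion₂_subset fun ξ hξ => hξ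
  haveI : Countable ↥(bigXi ε Ω) := (Set.to_countable (bigXi ε Ω)).to_subtype
  have hUeq : U = ⋃ ξ : bigXi ε Ω, cellOf ε (ξ : Fin N → ℤ) := by
    rw [hUdef, Set.biUnion_eq_iUnion]
  have hHU0 : volume (H \ U) = 0 := by
    have hsub : H \ U ⊆ ⋃ ξ : bigXi ε Ω,
        (closure (cellOf ε (ξ : Fin N → ℤ)) \ cellOf ε (ξ : Fin N → ℤ)) := by
      intro x hx
      have hxcl : x ∈ ⋃ ξ ∈ bigXi ε Ω, closure (cellOf ε ξ) := interior_subset hx.1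
      simp only [Set.mem_iUnion] at hxcl ⊢
      obtain ⟨ξ, hξ, hxξ⟩ := hxcl
      refine ⟨⟨ξ, hξ⟩, hxξ, fun hmem => hx.2 ?_⟩
      rw [hUeq]
      exact Set.mem_iUnion.mpr ⟨⟨ξ, hξ⟩, hmem⟩
    exact measure_mono_null hsub
      (measure_iUnion_null fun ξ => UIH.volume_closure_cell_diff hε _)
  have hfmeas : Measurable fun x => B |w x| := UIH.measurable_B_abs hBc hw
  set g : (Fin N → ℝ) → ENNReal := fun x => ENNReal.ofReal (B |w x|) with hgdef
  have hgmeas : Measurable g := hfmeas.ennreal_ofReal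
  have hunfmeas : Measurable fun p : (Fin N → ℝ) × (Fin N → ℝ) => unfold ε Ω w p.1 p.2 := by
    have hcond : MeasurableSet {p : (Fin N → ℝ) × (Fin N → ℝ) | p.1 ∈ H} :=
      hHmeas.preimage measurable_fst
    refine Measurable.ite hcond ?_ measurable_const
    refine hw.comp (measurable_pi_lambda _ fun i => ?_)
    have h1 : Measurable fun p : (Fin N → ℝ) × (Fin N → ℝ) => (⌊p.1 i / ε⌋ : ℝ) :=
      measurable_from_top.comp
        (Int.measurable_floor.comp (by fun_prop : Measurable fun p : (Fin N → ℝ) × (Fin N → ℝ) => p.1 i / ε))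
    exact (h1.add ((measurable_pi_apply i).comp measurable_snd)).const_mul ε
  have hFnn : ∀ p : (Fin N → ℝ) × (Fin N → ℝ), 0 ≤ B |unfold ε Ω w p.1 p.2| :=
    fun p => hBnn _ (abs_nonneg _)
  have hFmeas : Measurable fun p : (Fin N → ℝ) × (Fin N → ℝ) => B |unfold ε Ω w p.1 p.2| :=
    UIH.measurable_B_abs hBc hunfmeas
  have hprodmeas : ∀ ξ : Fin N → ℤ, MeasurableSet ((cellOf ε ξ) ×ˢ Y) :=
    fun ξ => (UIH.measurableSet_cell ε ξ).prod hYmeas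
  have hcellH : ∀ ξ : bigXi ε Ω, cellOf ε (ξ : Fin N → ℤ) ⊆ H := fun ξ x hx =>
    hUH (by rw [hUeq]; exact Set.mem_iUnion.mpr ⟨ξ, hx⟩)
  have key : (∫⁻ p in Ω ×ˢ Y, ENNReal.ofReal (B |unfold ε Ω w p.1 p.2|))
      = ∫⁻ x in H, g x := by
    calc ∫⁻ p in Ω ×ˢ Y, ENNReal.ofReal (B |unfold ε Ω w p.1 p.2|)
        = ∫⁻ p in ((Ω ∩ H) ×ˢ Y) ∪ ((Ω \ H) ×ˢ Y),
            ENNReal.ofReal (B |unfold ε Ω w p.1 p.2|) := by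
          rw [← Set.union_prod, Set.inter_union_diff]
      _ = (∫⁻ p in (Ω ∩ H) ×ˢ Y, ENNReal.ofReal (B |unfold ε Ω w p.1 p.2|))
          + ∫⁻ p in (Ω \ H) ×ˢ Y, ENNReal.ofReal (B |unfold ε Ω w p.1 p.2|) :=
          lintegral_union ((hΩopen.measurableSet.diff hHmeas).prod hYmeas)
            (Set.Disjoint.set_prod_left
              (Set.disjoint_left.mpr fun x hx1 hx2 => hx2.2 hx1.2) _ _)
      _ = ∫⁻ p in (Ω ∩ H) ×ˢ Y, ENNReal.ofReal (B |unfold ε Ω w p.1 p.2|) := by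
          have h0 : ∫⁻ p in (Ω \ H) ×ˢ Y, ENNReal.ofReal (B |unfold ε Ω w p.1 p.2|) = 0 := by
            refine (lintegral_eq_zero_iff hFmeas.ennreal_ofReal).mpr ?_
            refine (ae_restrict_iff' ((hΩopen.measurableSet.diff hHmeas).prod hYmeas)).mpr
              (ae_of_all _ fun p hp => ?_)
            have hp1 : p.1 ∉ H := hp.1.2
            simp [unfold, ← hHdef, hp1, hB0]
          rw [h0, add_zero]
      _ = ∫⁻ p in U ×ˢ Y, ENNReal.ofReal (B |unfold ε Ω w p.1 p.2|) := by
          refine setLIntegral_congr ?_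
          rw [MeasureTheory.ae_eq_set]
          constructor
          · refine measure_mono_null (t := (H \ U) ×ˢ (Set.univ : Set (Fin N → ℝ)))
              (fun p hp => ?_) ?_
            · have h1 : p.1 ∈ Ω ∩ H := hp.1.1
              have h2 : p.2 ∈ Y := hp.1.2
              have h3 : p.1 ∉ U := fun hu => hp.2 ⟨hu, h2⟩
              exact ⟨⟨h1.2, h3⟩, trivial⟩
            · rw [Measure.volume_eq_prod, Measure.prod_prod, hHU0, zero_mul]
          · refine measure_mono_null (t := (∅ : Set ((Fin N → ℝ) × (Fin N → ℝ))))
              (fun p hp => ?_) measure_empty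
            exact (hp.2 ⟨⟨hUΩ hp.1.1, hUH hp.1.1⟩, hp.1.2⟩).elim
      _ = ∑' ξ : bigXi ε Ω, ∫⁻ p in (cellOf ε (ξ : Fin N → ℤ)) ×ˢ Y,
            ENNReal.ofReal (B |unfold ε Ω w p.1 p.2|) := by
          rw [hUeq, Set.iUnion_prod_const]
          exact lintegral_iUnion (fun ξ => hprodmeas _)
            (fun ξ η hne => Set.Disjoint.set_prod_left
              (UIH.disjoint_cells hε (fun h => hne (Subtype.ext h))) _ _) _
      _ = ∑' ξ : bigXi ε Ω, ∫⁻ p in (cellOf ε (ξ : Fin N → ℤ)) ×ˢ Y,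
            g (fun i => ε * (((ξ : Fin N → ℤ) i : ℝ) + p.2 i)) := by
          refine tsum_congr fun ξ => ?_
          refine setLIntegral_congr_fun (hprodmeas _) (fun p hp => ?_)
          have h1 : p.1 ∈ H := hcellH ξ hp.1
          have h2 : ∀ i, (⌊p.1 i / ε⌋ : ℤ) = (ξ : Fin N → ℤ) i :=
            UIH.floor_of_mem_cell hε hp.1
          have h3 : (fun i => ε * ((⌊p.1 i / ε⌋ : ℝ) + p.2 i))
              = fun i => ε * ((((ξ : Fin N → ℤ)) i : ℝ) + p.2 i) := by
            funext i; rw [h2 i]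
          simp only [unfold, ← hHdef, if_pos h1, h3, hgdef]
      _ = ∑' ξ : bigXi ε Ω, volume (cellOf ε (ξ : Fin N → ℤ))
            * ∫⁻ y in Y, g (fun i => ε * (((ξ : Fin N → ℤ) i : ℝ) + y i)) := by
          refine tsum_congr fun ξ => ?_
          exact UIH2.setLIntegral_prod_snd hYmeas _
            (hgmeas.comp (measurable_pi_lambda _ fun i =>
              (((measurable_pi_apply i).const_add _).const_mul ε)))
      _ = ∑' ξ : bigXi ε Ω, volume (cellOf ε (ξ : Fin N → ℤ))
            * (ENNReal.ofReal ((ε ^ N)⁻¹) * ∫⁻ x in cellOf ε (ξ : Fin N → ℤ), g x) := by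
          refine tsum_congr fun ξ => ?_
          rw [hYdef, UIH2.lintegral_unitCell_comp hε _ g hgmeas]
      _ = ∑' ξ : bigXi ε Ω, ∫⁻ x in cellOf ε (ξ : Fin N → ℤ), g x := by
          refine tsum_congr fun ξ => ?_
          rw [UIH.volume_cell hε, ← mul_assoc,
            ← ENNReal.ofReal_mul (by positivity),
            mul_inv_cancel₀ (by positivity), ENNReal.ofReal_one, one_mul]
      _ = ∫⁻ x in U, g x := by
          rw [hUeq]
          exact (lintegral_iUnion (fun ξ => UIH.measurableSet_cell ε _)
            (fun ξ η hne => UIH.disjoint_cells hε (fun h => hne (Subtype.ext h))) _).symm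
      _ = ∫⁻ x in H, g x := by
          refine setLIntegral_congr ?_
          rw [MeasureTheory.ae_eq_set]
          refine ⟨?_, hHU0⟩
          rw [Set.diff_eq_empty.mpr hUH]
          exact measure_empty
  have e1 : (∫ p in Ω ×ˢ Y, B |unfold ε Ω w p.1 p.2|)
      = (∫⁻ p in Ω ×ˢ Y, ENNReal.ofReal (B |unfold ε Ω w p.1 p.2|)).toReal :=
    integral_eq_lintegral_of_nonneg_ae (ae_of_all _ hFnn) hFmeas.aestronglyMeasurable
  have e2 : (∫ x in H, B |w x|) = (∫⁻ x in H, g x).toReal :=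
    integral_eq_lintegral_of_nonneg_ae (ae_of_all _ fun x => hBnn _ (abs_nonneg _))
      hfmeas.aestronglyMeasurable
  have hvolY : volume Y = 1 := UIH.volume_unitCell N
  have part1 : (1 / (volume Y).toReal)
      * (∫ p in Ω ×ˢ Y, B |unfold ε Ω w p.1 p.2|) = ∫ x in H, B |w x| := by
    rw [hvolY, ENNReal.toReal_one, div_one, one_mul, e1, key, ← e2]
  have hdisj : Disjoint (Ω ∩ H) (Ω \ H) :=
    Set.disjoint_left.mpr fun x hx1 hx2 => hx2.2 hx1.2
  have hsplit : (∫ x in Ω, B |w x|) = (∫ x in Ω ∩ H, B |w x|) + ∫ x in Ω \ H, B |w x| := by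
    rw [← setIntegral_union hdisj (hΩopen.measurableSet.diff hHmeas)
      (hwB.mono_set Set.inter_subset_left) (hwB.mono_set Set.diff_subset),
      Set.inter_union_diff]
  have hΩH : (∫ x in Ω ∩ H, B |w x|) = ∫ x in H, B |w x| := by
    refine setIntegral_congr_set ?_
    rw [MeasureTheory.ae_eq_set]
    constructor
    · exact measure_mono_null (t := (∅ : Set (Fin N → ℝ)))
        (fun x hx => (hx.2 hx.1.2).elim) measure_empty
    · exact measure_mono_null (t := H \ U)
        (fun x hx => ⟨hx.1, fun hxU => hx.2 ⟨hUΩ hxU, hx.1⟩⟩) hHU0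
  have hlam : lamEps ε Ω = Ω \ H := rfl
  have part2 : (∫ x in H, B |w x|) = (∫ x in Ω, B |w x|) - ∫ x in lamEps ε Ω, B |w x| := by
    rw [hlam, hsplit, hΩH]; ring
  refine ⟨part1, part2, ?_⟩
  rw [part1, part2]
  have hnn : 0 ≤ ∫ x in lamEps ε Ω, B |w x| :=
    integral_nonneg fun x => hBnn _ (abs_nonneg _)
  linarith
end
end

section
/- Let B be a Young function and T_ε the unfolding operator on a bounded open set Ω ⊂ ℝᴺ with Y = (0,1)ᴺ. Then for every w ∈ L^B(Ω), the Luxemburg norms satisfy ‖T_ε(w)‖_{L^B(Ω×Y)} = ‖w·χ_{Ω̂_ε}‖_{L^B(Ω)} ≤ ‖w‖_{L^B(Ω)}, and in particular ‖T_ε(w)‖_{L^B(Ω×Y)} ≤ (1 + |Y|)‖w‖_{L^B(Ω)}. -/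
open MeasureTheory Filter Set Topology
open scoped ENNReal NNReal

noncomputable section

section Aux

open scoped ENNReal NNReal

variable {N : ℕ} {ε : ℝ} {Ω : Set (Fin N → ℝ)} {B : ℝ → ℝ}

lemma young_zero (hB : IsYoung B) : B 0 = 0 := by
  obtain ⟨hcont, -, -, -, h0, -⟩ := hB
  have hid : Tendsto (fun t : ℝ => t) (𝓝[>] (0:ℝ)) (𝓝 0) :=
    (continuous_id.tendsto 0).mono_left nhdsWithin_le_nhds
  have h1 : Tendsto B (𝓝[>] (0:ℝ)) (𝓝 0) := by
    have := h0.mul hid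
    rw [mul_zero] at this
    refine this.congr' ?_
    filter_upwards [self_mem_nhdsWithin] with t ht
    exact div_mul_cancel₀ (B t) (ne_of_gt ht)
  have h2 : Tendsto B (𝓝[>] (0:ℝ)) (𝓝 (B 0)) :=
    (hcont 0 Set.self_mem_Ici).mono_left (nhdsWithin_mono 0 Ioi_subset_Ici_self)
  exact tendsto_nhds_unique h2 h1

lemma young_mono (hB : IsYoung B) {s t : ℝ} (hs : 0 ≤ s) (hst : s ≤ t) : B s ≤ B t := by
  have hz := young_zero hB
  obtain ⟨-, hconv, hnn, -, -, -⟩ := hB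
  rcases eq_or_lt_of_le hs with h | h
  · rw [← h, hz]
    exact hnn t (by linarith)
  · have ht : 0 < t := lt_of_lt_of_le h hst
    set a : ℝ := s / t with ha
    have ha0 : 0 ≤ a := div_nonneg hs ht.le
    have ha1 : a ≤ 1 := (div_le_one ht).mpr hst
    have key := hconv.2 (Set.self_mem_Ici : (0:ℝ) ∈ Set.Ici 0)
      (show t ∈ Set.Ici (0:ℝ) from ht.le)
      (show (0:ℝ) ≤ 1 - a by linarith) (show (0:ℝ) ≤ a from ha0)
      (show (1 - a) + a = 1 by ring)
    have hsa : (1 - a) • (0:ℝ) + a • t = s := by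
      simp [smul_eq_mul, ha, div_mul_cancel₀ s (ne_of_gt ht)]
    rw [hsa, hz, smul_eq_mul, smul_eq_mul, mul_zero, zero_add] at key
    exact key.trans (mul_le_of_le_one_left (hnn t ht.le) ha1)

lemma cell_eq_pi (ε : ℝ) (ξ : Fin N → ℤ) :
    cellOf ε ξ = Set.univ.pi fun i => Set.Ioo (ε * (ξ i : ℝ)) (ε * ((ξ i : ℝ) + 1)) := by
  ext x; simp [cellOf, Set.mem_pi]

lemma cell_open (ε : ℝ) (ξ : Fin N → ℤ) : IsOpen (cellOf ε ξ) := by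
  rw [cell_eq_pi]; exact isOpen_set_pi Set.finite_univ (fun i _ => isOpen_Ioo)

lemma cell_volume (hε : 0 < ε) (ξ : Fin N → ℤ) :
    volume (cellOf ε ξ) = ENNReal.ofReal (ε ^ N) := by
  rw [cell_eq_pi, volume_pi_pi]
  simp only [Real.volume_Ioo]
  have : ∀ i : Fin N, ε * ((ξ i : ℝ) + 1) - ε * (ξ i : ℝ) = ε := by intro i; ring
  simp [this, ENNReal.ofReal_pow hε.le]

lemma floor_eq_of_mem_cell (hε : 0 < ε) {ξ : Fin N → ℤ} {x : Fin N → ℝ}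
    (hx : x ∈ cellOf ε ξ) (i : Fin N) : ⌊x i / ε⌋ = ξ i := by
  obtain ⟨h1, h2⟩ := hx i
  rw [Int.floor_eq_iff]
  constructor
  · exact le_of_lt (by rwa [lt_div_iff₀ hε, mul_comm])
  · rw [div_lt_iff₀ hε]; linarith

lemma closure_cell (hε : 0 < ε) (ξ : Fin N → ℤ) :
    closure (cellOf ε ξ) = Set.univ.pi fun i => Set.Icc (ε * (ξ i : ℝ)) (ε * ((ξ i : ℝ) + 1)) := by
  rw [cell_eq_pi, closure_pi_set]
  exact Set.pi_congr rfl fun i _ =>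
    closure_Ioo (ne_of_lt (mul_lt_mul_of_pos_left (lt_add_one _) hε))

lemma closure_cell_null (hε : 0 < ε) (ξ : Fin N → ℤ) :
    volume (closure (cellOf ε ξ) \ cellOf ε ξ) = 0 := by
  have hsub : cellOf ε ξ ⊆ closure (cellOf ε ξ) := subset_closure
  have hv : volume (closure (cellOf ε ξ)) = ENNReal.ofReal (ε ^ N) := by
    rw [closure_cell hε, volume_pi_pi]
    simp only [Real.volume_Icc]
    have : ∀ i : Fin N, ε * ((ξ i : ℝ) + 1) - ε * (ξ i : ℝ) = ε := by intro i; ring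
    simp [this, ENNReal.ofReal_pow hε.le]
  rw [measure_diff hsub (cell_open ε ξ).measurableSet.nullMeasurableSet
    (by rw [cell_volume hε]; exact ENNReal.ofReal_ne_top), hv, cell_volume hε, tsub_self]

lemma cell_subset_hat {ξ : Fin N → ℤ} (hξ : ξ ∈ bigXi ε Ω) : cellOf ε ξ ⊆ hatOmega ε Ω :=
  interior_maximal
    (subset_trans subset_closure
      (Set.subset_biUnion_of_mem (u := fun ξ => closure (cellOf ε ξ)) hξ))
    (cell_open ε ξ)

lemma hat_diff_null (hε : 0 < ε) :
    volume (hatOmega ε Ω \ ⋃ ξ ∈ bigXi ε Ω, cellOf ε ξ) = 0 := by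
  have hsub : hatOmega ε Ω \ (⋃ ξ ∈ bigXi ε Ω, cellOf ε ξ) ⊆
      ⋃ ξ ∈ bigXi ε Ω, (closure (cellOf ε ξ) \ cellOf ε ξ) := by
    rintro x ⟨hx1, hx2⟩
    have hmem : x ∈ ⋃ ξ ∈ bigXi ε Ω, closure (cellOf ε ξ) := interior_subset hx1
    obtain ⟨ξ, hξ, hxξ⟩ := Set.mem_iUnion₂.mp hmem
    exact Set.mem_biUnion hξ ⟨hxξ, fun h => hx2 (Set.mem_biUnion hξ h)⟩
  refine measure_mono_null hsub ?_
  rw [measure_biUnion_null_iff (Set.to_countable _)]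
  exact fun ξ _ => closure_cell_null hε ξ

lemma cells_disjoint (hε : 0 < ε) :
    Pairwise (Function.onFun Disjoint fun ξ : ↥(bigXi ε Ω) => cellOf ε (ξ : Fin N → ℤ)) := by
  intro ξ ξ' hne
  rw [Function.onFun, Set.disjoint_left]
  intro x hx hx'
  apply hne
  ext i
  rw [← floor_eq_of_mem_cell hε hx i, floor_eq_of_mem_cell hε hx' i]

/-- Reduction of integrals of `hatOmega`-indicator functions over `Ω` to sums over the cells. -/
lemma indicator_lintegral_eq (hε : 0 < ε) (hΩopen : IsOpen Ω) (φ : (Fin N → ℝ) → ℝ≥0∞) :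
    ∫⁻ x, (hatOmega ε Ω).indicator φ x ∂(volume.restrict Ω) =
      ∑' ξ : ↥(bigXi ε Ω), ∫⁻ x in cellOf ε (ξ : Fin N → ℤ), φ x ∂volume := by
  have hhat : MeasurableSet (hatOmega ε Ω) := isOpen_interior.measurableSet
  have hS : (hatOmega ε Ω ∩ Ω : Set (Fin N → ℝ)) =ᵐ[volume]
      (⋃ ξ ∈ bigXi ε Ω, cellOf ε ξ : Set (Fin N → ℝ)) := by
    rw [MeasureTheory.ae_eq_set]
    constructor
    · exact measure_mono_null (Set.diff_subset_diff_left Set.inter_subset_left) (hat_diff_null hε)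
    · have : ((⋃ ξ ∈ bigXi ε Ω, cellOf ε ξ) \ (hatOmega ε Ω ∩ Ω) : Set (Fin N → ℝ)) = ∅ := by
        rw [Set.diff_eq_empty]
        intro x hx
        obtain ⟨ξ, hξ, hxξ⟩ := Set.mem_iUnion₂.mp hx
        exact ⟨cell_subset_hat hξ hxξ, hξ hxξ⟩
      rw [this, measure_empty]
  rw [lintegral_indicator hhat, Measure.restrict_restrict hhat, setLIntegral_congr hS,
    Set.biUnion_eq_iUnion, lintegral_iUnion (fun ξ => (cell_open ε _).measurableSet)
      (cells_disjoint hε)]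

/-- Change of variables `y ↦ c + r • y` for lintegrals on `Fin N → ℝ`. -/
lemma lintegral_comp_affine {r : ℝ} (hr : r ≠ 0) (c : Fin N → ℝ)
    (F : (Fin N → ℝ) → ℝ≥0∞) (hF : Measurable F) :
    ∫⁻ y, F (c + r • y) = ENNReal.ofReal |(r ^ N)⁻¹| * ∫⁻ z, F z := by
  calc ∫⁻ y, F (c + r • y)
      = ∫⁻ y, (fun z => F (c + z)) (r • y) := rfl
    _ = ∫⁻ z, (fun z => F (c + z)) z ∂(Measure.map (r • ·) volume) :=
        (lintegral_map (hF.comp (measurable_const_add c)) (measurable_const_smul r)).symm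
    _ = ENNReal.ofReal |(r ^ N)⁻¹| * ∫⁻ z, F (c + z) := by
        rw [Measure.map_addHaar_smul volume hr, Module.finrank_fintype_fun_eq_card,
          Fintype.card_fin, lintegral_smul_measure, smul_eq_mul]
    _ = ENNReal.ofReal |(r ^ N)⁻¹| * ∫⁻ z, F z := by
        rw [← lintegral_map hF (measurable_const_add c),
          MeasureTheory.map_add_left_eq_self volume c]

lemma mem_cell_affine (hε : 0 < ε) (ξ : Fin N → ℤ) (y : Fin N → ℝ) :
    ((fun i => ε * (ξ i : ℝ)) + ε • y ∈ cellOf ε ξ) ↔ y ∈ unitCell N := by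
  simp only [cellOf, unitCell, Set.mem_setOf_eq, Set.mem_pi, Set.mem_univ, forall_true_left,
    Pi.add_apply, Pi.smul_apply, smul_eq_mul, Set.mem_Ioo]
  refine forall_congr' fun i => ?_
  constructor
  · rintro ⟨h1, h2⟩
    constructor
    · nlinarith
    · nlinarith
  · rintro ⟨h1, h2⟩
    constructor
    · nlinarith
    · nlinarith

/-- Exact change of variables over one cell. -/
lemma cell_change_of_variables (hε : 0 < ε) (ξ : Fin N → ℤ)
    (F : (Fin N → ℝ) → ℝ≥0∞) (hF : Measurable F) :
    ENNReal.ofReal (ε ^ N) *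
        ∫⁻ y in unitCell N, F (fun i => ε * ((ξ i : ℝ) + y i)) =
      ∫⁻ z in cellOf ε ξ, F z := by
  set c : Fin N → ℝ := fun i => ε * (ξ i : ℝ) with hc
  have hunit : MeasurableSet (unitCell N) :=
    (isOpen_set_pi Set.finite_univ (fun i _ => isOpen_Ioo)).measurableSet
  have hpt : ∀ y : Fin N → ℝ, (fun i => ε * ((ξ i : ℝ) + y i)) = c + ε • y := by
    intro y; funext i; simp [hc, mul_add]
  have h1 : ∫⁻ y in unitCell N, F (fun i => ε * ((ξ i : ℝ) + y i)) =
      ∫⁻ y, (cellOf ε ξ).indicator F (c + ε • y) := by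
    rw [← lintegral_indicator hunit]
    refine lintegral_congr fun y => ?_
    by_cases hy : y ∈ unitCell N
    · rw [Set.indicator_of_mem hy, hpt y,
        Set.indicator_of_mem ((mem_cell_affine hε ξ y).mpr hy)]
    · rw [Set.indicator_of_notMem hy,
        Set.indicator_of_notMem (fun h => hy ((mem_cell_affine hε ξ y).mp h))]
  have h2 := lintegral_comp_affine (N := N) (ne_of_gt hε) c ((cellOf ε ξ).indicator F)
    (hF.indicator (cell_open ε ξ).measurableSet)
  rw [h1, h2, lintegral_indicator (cell_open ε ξ).measurableSet, ← mul_assoc,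
    abs_of_pos (by positivity), ← ENNReal.ofReal_mul (by positivity),
    mul_inv_cancel₀ (by positivity), ENNReal.ofReal_one, one_mul]

end Aux

/-- Luxemburg-norm identities for the unfolding operator:
`‖T_ε w‖_{L^B(Ω×Y)} = ‖w·χ_{Ω̂_ε}‖_{L^B(Ω)} ≤ ‖w‖_{L^B(Ω)} ≤ (1+|Y|)‖w‖_{L^B(Ω)}`. -/
theorem unfold_luxNorm (N : ℕ) (B : ℝ → ℝ) (hB : IsYoung B)
    (Ω : Set (Fin N → ℝ)) (hΩopen : IsOpen Ω) (hΩbdd : Bornology.IsBounded Ω)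
    (ε : ℝ) (hε : 0 < ε) (w : (Fin N → ℝ) → ℝ) (hw : Measurable w)
    (hwLB : ∃ k : ℝ, 0 < k ∧
      ∫⁻ x in Ω, ENNReal.ofReal (B (|w x| / k)) ≤ 1) :
    luxNorm (MeasureTheory.volume.restrict (Ω ×ˢ unitCell N)) B
        (fun p => unfold ε Ω w p.1 p.2) =
      luxNorm (MeasureTheory.volume.restrict Ω) B ((hatOmega ε Ω).indicator w) ∧
    luxNorm (MeasureTheory.volume.restrict Ω) B ((hatOmega ε Ω).indicator w) ≤
      luxNorm (MeasureTheory.volume.restrict Ω) B w ∧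
    luxNorm (MeasureTheory.volume.restrict (Ω ×ˢ unitCell N)) B
        (fun p => unfold ε Ω w p.1 p.2) ≤
      (1 + (MeasureTheory.volume (unitCell N)).toReal) *
        luxNorm (MeasureTheory.volume.restrict Ω) B w := by
  obtain ⟨k₀, hk₀, hk₀le⟩ := hwLB
  have hBz := young_zero hB
  have hGcont : Continuous fun t : ℝ => B |t| :=
    hB.1.comp_continuous continuous_abs (fun x => abs_nonneg x)
  have hGmeas : Measurable fun t : ℝ => ENNReal.ofReal (B |t|) :=
    ENNReal.measurable_ofReal.comp hGcont.measurable
  have hhat : MeasurableSet (hatOmega ε Ω) := isOpen_interior.measurableSet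
  -- the key integral identity
  have key : ∀ k : ℝ, 0 < k →
      (∫⁻ p, ENNReal.ofReal (B (|unfold ε Ω w p.1 p.2| / k))
          ∂(volume.restrict (Ω ×ˢ unitCell N))) =
        ∫⁻ x, ENNReal.ofReal (B (|(hatOmega ε Ω).indicator w x| / k))
          ∂(volume.restrict Ω) := by
    intro k hk
    set F : (Fin N → ℝ) → ℝ≥0∞ := fun z => ENNReal.ofReal (B |w z / k|) with hFdef
    have hF : Measurable F := hGmeas.comp (hw.div_const k)
    have hFeq : ∀ z, ENNReal.ofReal (B (|w z| / k)) = F z := by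
      intro z; rw [hFdef]; simp only
      rw [abs_div, abs_of_pos hk]
    have hzero : ENNReal.ofReal (B (|(0:ℝ)| / k)) = 0 := by
      rw [abs_zero, zero_div, hBz, ENNReal.ofReal_zero]
    -- right-hand side
    have hRHS : (∫⁻ x, ENNReal.ofReal (B (|(hatOmega ε Ω).indicator w x| / k))
        ∂(volume.restrict Ω)) =
        ∑' ξ : ↥(bigXi ε Ω), ∫⁻ x in cellOf ε (ξ : Fin N → ℤ), F x ∂volume := by
      rw [← indicator_lintegral_eq hε hΩopen F]
      refine lintegral_congr fun x => ?_
      by_cases hx : x ∈ hatOmega ε Ω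
      · rw [Set.indicator_of_mem hx, Set.indicator_of_mem hx, hFeq]
      · rw [Set.indicator_of_notMem hx, Set.indicator_of_notMem hx, hzero]
    -- the unfolding map
    set T : (Fin N → ℝ) × (Fin N → ℝ) → (Fin N → ℝ) :=
      fun p => fun i => ε * ((⌊p.1 i / ε⌋ : ℝ) + p.2 i) with hTdef
    have hT : Measurable T := by
      refine measurable_pi_lambda _ fun i => ?_
      have h1 : Measurable fun p : (Fin N → ℝ) × (Fin N → ℝ) => p.1 i / ε :=
        Measurable.div_const (f := fun p : (Fin N → ℝ) × (Fin N → ℝ) => p.1 i)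
          ((measurable_pi_apply i).comp measurable_fst) ε
      have h3 : Measurable fun p : (Fin N → ℝ) × (Fin N → ℝ) => ((⌊p.1 i / ε⌋ : ℤ) : ℝ) :=
        measurable_from_top.comp h1.floor
      exact (h3.add ((measurable_pi_apply i).comp measurable_snd)).const_mul ε
    have hint : ∀ p : (Fin N → ℝ) × (Fin N → ℝ),
        ENNReal.ofReal (B (|unfold ε Ω w p.1 p.2| / k)) =
          ((hatOmega ε Ω) ×ˢ (Set.univ : Set (Fin N → ℝ))).indicator (fun q => F (T q)) p := by
      intro p
      by_cases hp : p.1 ∈ hatOmega ε Ω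
      · rw [Set.indicator_of_mem (Set.mem_prod.mpr ⟨hp, Set.mem_univ _⟩)]
        rw [unfold, if_pos hp]
        exact hFeq _
      · rw [Set.indicator_of_notMem (fun h => hp h.1)]
        rw [unfold, if_neg hp, hzero]
    have hmeasInd : Measurable
        (((hatOmega ε Ω) ×ˢ (Set.univ : Set (Fin N → ℝ))).indicator (fun q => F (T q))) :=
      (hF.comp hT).indicator (hhat.prod MeasurableSet.univ)
    have hLHS : (∫⁻ p, ENNReal.ofReal (B (|unfold ε Ω w p.1 p.2| / k))
        ∂(volume.restrict (Ω ×ˢ unitCell N))) =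
        ∑' ξ : ↥(bigXi ε Ω), ∫⁻ x in cellOf ε (ξ : Fin N → ℤ), F x ∂volume := by
      calc (∫⁻ p, ENNReal.ofReal (B (|unfold ε Ω w p.1 p.2| / k))
          ∂(volume.restrict (Ω ×ˢ unitCell N)))
          = ∫⁻ p, ((hatOmega ε Ω) ×ˢ (Set.univ : Set (Fin N → ℝ))).indicator
              (fun q => F (T q)) p
              ∂((volume.restrict Ω).prod (volume.restrict (unitCell N))) := by
            rw [Measure.volume_eq_prod, Measure.prod_restrict]
            exact lintegral_congr hint
        _ = ∫⁻ x, (∫⁻ y, ((hatOmega ε Ω) ×ˢ (Set.univ : Set (Fin N → ℝ))).indicator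
              (fun q => F (T q)) (x, y) ∂(volume.restrict (unitCell N)))
              ∂(volume.restrict Ω) :=
            lintegral_prod _ hmeasInd.aemeasurable
        _ = ∫⁻ x, (hatOmega ε Ω).indicator
              (fun x' => ∫⁻ y in unitCell N, F (T (x', y))) x ∂(volume.restrict Ω) := by
            refine lintegral_congr fun x => ?_
            by_cases hx : x ∈ hatOmega ε Ω
            · rw [Set.indicator_of_mem hx]
              refine lintegral_congr fun y => ?_
              rw [Set.indicator_of_mem (Set.mem_prod.mpr ⟨hx, Set.mem_univ _⟩)]
            · rw [Set.indicator_of_notMem hx]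
              have hz : ∀ y, ((hatOmega ε Ω) ×ˢ (Set.univ : Set (Fin N → ℝ))).indicator
                  (fun q => F (T q)) (x, y) = 0 :=
                fun y => Set.indicator_of_notMem (fun h => hx h.1) _
              simp only [hz, lintegral_zero]
        _ = ∑' ξ : ↥(bigXi ε Ω), ∫⁻ x in cellOf ε (ξ : Fin N → ℤ),
              (∫⁻ y in unitCell N, F (T (x, y))) ∂volume :=
            indicator_lintegral_eq hε hΩopen _
        _ = ∑' ξ : ↥(bigXi ε Ω), ∫⁻ x in cellOf ε (ξ : Fin N → ℤ), F x ∂volume := by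
            refine tsum_congr fun ξ => ?_
            have hcongr : (∫⁻ x in cellOf ε (ξ : Fin N → ℤ),
                (∫⁻ y in unitCell N, F (T (x, y))) ∂volume) =
                ∫⁻ _x in cellOf ε (ξ : Fin N → ℤ),
                  (∫⁻ y in unitCell N, F (fun i => ε * (((ξ : Fin N → ℤ) i : ℝ) + y i)))
                  ∂volume := by
              refine setLIntegral_congr_fun (cell_open ε _).measurableSet
                (fun x hx => ?_)
              refine lintegral_congr fun y => ?_
              congr 1
              funext i
              rw [hTdef]
              simp only
              rw [floor_eq_of_mem_cell hε hx i]
            rw [hcongr, setLIntegral_const, cell_volume hε, mul_comm,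
              cell_change_of_variables hε _ F hF]
    rw [hLHS, hRHS]
  -- comparing the admissible sets
  have habs : ∀ x, |(hatOmega ε Ω).indicator w x| ≤ |w x| := by
    intro x
    by_cases hx : x ∈ hatOmega ε Ω
    · rw [Set.indicator_of_mem hx]
    · rw [Set.indicator_of_notMem hx, abs_zero]; exact abs_nonneg _
  have hmonoInt : ∀ k : ℝ, 0 < k →
      (∫⁻ x, ENNReal.ofReal (B (|(hatOmega ε Ω).indicator w x| / k)) ∂(volume.restrict Ω)) ≤
        ∫⁻ x, ENNReal.ofReal (B (|w x| / k)) ∂(volume.restrict Ω) := by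
    intro k hk
    refine lintegral_mono fun x => ENNReal.ofReal_le_ofReal ?_
    exact young_mono hB (div_nonneg (abs_nonneg _) hk.le)
      (div_le_div_of_nonneg_right (habs x) hk.le)
  have hsub : {k : ℝ | 0 < k ∧
        (∫⁻ x, ENNReal.ofReal (B (|w x| / k)) ∂(volume.restrict Ω)) ≤ 1} ⊆
      {k : ℝ | 0 < k ∧
        (∫⁻ x, ENNReal.ofReal (B (|(hatOmega ε Ω).indicator w x| / k))
          ∂(volume.restrict Ω)) ≤ 1} :=
    fun k hk => ⟨hk.1, le_trans (hmonoInt k hk.1) hk.2⟩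
  have hne : {k : ℝ | 0 < k ∧
      (∫⁻ x, ENNReal.ofReal (B (|w x| / k)) ∂(volume.restrict Ω)) ≤ 1}.Nonempty :=
    ⟨k₀, hk₀, hk₀le⟩
  have part1 : luxNorm (MeasureTheory.volume.restrict (Ω ×ˢ unitCell N)) B
      (fun p => unfold ε Ω w p.1 p.2) =
      luxNorm (MeasureTheory.volume.restrict Ω) B ((hatOmega ε Ω).indicator w) := by
    unfold luxNorm
    congr 1
    ext k
    simp only [Set.mem_setOf_eq]
    refine and_congr_right fun hk => ?_
    rw [show (∫⁻ x, ENNReal.ofReal (B (|unfold ε Ω w x.1 x.2| / k))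
        ∂(volume.restrict (Ω ×ˢ unitCell N))) =
      ∫⁻ x, ENNReal.ofReal (B (|(hatOmega ε Ω).indicator w x| / k))
        ∂(volume.restrict Ω) from key k hk]
  have part2 : luxNorm (MeasureTheory.volume.restrict Ω) B ((hatOmega ε Ω).indicator w) ≤
      luxNorm (MeasureTheory.volume.restrict Ω) B w := by
    unfold luxNorm
    exact csInf_le_csInf ⟨0, fun k hk => hk.1.le⟩ hne hsub
  refine ⟨part1, part2, ?_⟩
  have h0 : 0 ≤ luxNorm (MeasureTheory.volume.restrict Ω) B w :=
    Real.sInf_nonneg (fun x hx => hx.1.le)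
  have hc : (0:ℝ) ≤ (MeasureTheory.volume (unitCell N)).toReal := ENNReal.toReal_nonneg
  calc luxNorm (MeasureTheory.volume.restrict (Ω ×ˢ unitCell N)) B (fun p => unfold ε Ω w p.1 p.2) = luxNorm (MeasureTheory.volume.restrict Ω) B ((hatOmega ε Ω).indicator w) := part1
    _ ≤ luxNorm (MeasureTheory.volume.restrict Ω) B w := part2
    _ ≤ (1 + (MeasureTheory.volume (unitCell N)).toReal) *
        luxNorm (MeasureTheory.volume.restrict Ω) B w :=
      le_mul_of_one_le_left h0 (by linarith)
end
end

section
/- Let B be a Young function and {w_ε} a family in L^B(Ω) with ∫_{Λ_ε} B(|w_ε|) dx → 0 as ε → 0. Then ∫_Ω B(|w_ε|) dx − (1/|Y|) ∫_{Ω×Y} B(|T_ε(w_ε)|) dx dy → 0 as ε → 0. -/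
open MeasureTheory Filter Set Topology

noncomputable section

namespace UCIAux

variable {N : ℕ}

lemma cellOf_eq_pi (ε : ℝ) (ξ : Fin N → ℤ) :
    cellOf ε ξ = Set.univ.pi fun i => Set.Ioo (ε * (ξ i : ℝ)) (ε * ((ξ i : ℝ) + 1)) := by
  ext x; simp [cellOf, Set.mem_pi]

lemma measurableSet_cellOf (ε : ℝ) (ξ : Fin N → ℤ) : MeasurableSet (cellOf ε ξ) := by
  rw [cellOf_eq_pi]; exact MeasurableSet.univ_pi fun i => measurableSet_Ioo

lemma isOpen_cellOf (ε : ℝ) (ξ : Fin N → ℤ) : IsOpen (cellOf ε ξ) := by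
  rw [cellOf_eq_pi]; exact isOpen_set_pi Set.finite_univ fun i _ => isOpen_Ioo

lemma volume_cellOf {ε : ℝ} (hε : 0 < ε) (ξ : Fin N → ℤ) :
    volume (cellOf ε ξ) = ENNReal.ofReal (ε ^ N) := by
  rw [cellOf_eq_pi, volume_pi_pi]
  have : ∀ i : Fin N, volume (Set.Ioo (ε * (ξ i : ℝ)) (ε * ((ξ i : ℝ) + 1)))
      = ENNReal.ofReal ε := by
    intro i; rw [Real.volume_Ioo]; ring_nf
  simp only [this, Finset.prod_const, Finset.card_univ, Fintype.card_fin]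
  rw [← ENNReal.ofReal_pow hε.le]

lemma floor_eq_of_mem_cell {ε : ℝ} (hε : 0 < ε) {ξ : Fin N → ℤ} {x : Fin N → ℝ}
    (hx : x ∈ cellOf ε ξ) (i : Fin N) : ⌊x i / ε⌋ = ξ i := by
  obtain ⟨h1, h2⟩ := hx i
  rw [Int.floor_eq_iff]
  constructor
  · rw [le_div_iff₀ hε]; linarith [h1]
  · rw [div_lt_iff₀ hε]; linarith [h2]

lemma cells_disjoint {ε : ℝ} (hε : 0 < ε) {ξ ξ' : Fin N → ℤ} (h : ξ ≠ ξ') :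
    Disjoint (cellOf ε ξ) (cellOf ε ξ') := by
  rw [Set.disjoint_left]
  intro x hx hx'
  exact h (funext fun i => (floor_eq_of_mem_cell hε hx i).symm.trans
    (floor_eq_of_mem_cell hε hx' i))

lemma closure_cellOf {ε : ℝ} (hε : 0 < ε) (ξ : Fin N → ℤ) :
    closure (cellOf ε ξ)
      = Set.univ.pi fun i => Set.Icc (ε * (ξ i : ℝ)) (ε * ((ξ i : ℝ) + 1)) := by
  rw [cellOf_eq_pi, closure_pi_set]
  refine Set.pi_congr rfl fun i _ => ?_
  refine closure_Ioo ?_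
  have : (ξ i : ℝ) < (ξ i : ℝ) + 1 := by linarith
  exact ne_of_lt (by nlinarith)

lemma volume_frontier_cell {ε : ℝ} (hε : 0 < ε) (ξ : Fin N → ℤ) :
    volume (closure (cellOf ε ξ) \ cellOf ε ξ) = 0 := by
  have hcl : volume (closure (cellOf ε ξ)) = ENNReal.ofReal (ε ^ N) := by
    rw [closure_cellOf hε, volume_pi_pi]
    have : ∀ i : Fin N, volume (Set.Icc (ε * (ξ i : ℝ)) (ε * ((ξ i : ℝ) + 1)))
        = ENNReal.ofReal ε := by
      intro i; rw [Real.volume_Icc]; ring_nf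
    simp only [this, Finset.prod_const, Finset.card_univ, Fintype.card_fin]
    rw [← ENNReal.ofReal_pow hε.le]
  rw [measure_diff subset_closure (measurableSet_cellOf ε ξ).nullMeasurableSet
    (by rw [volume_cellOf hε]; exact ENNReal.ofReal_ne_top),
    hcl, volume_cellOf hε, tsub_self]

/-- The union of the "bad" boundary parts of cells is null. -/
lemma volume_badSet {ε : ℝ} (hε : 0 < ε) (Ω : Set (Fin N → ℝ)) :
    volume (⋃ ξ ∈ bigXi ε Ω, (closure (cellOf ε ξ) \ cellOf ε ξ)) = 0 :=
  (measure_biUnion_null_iff (bigXi ε Ω).to_countable).2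
    fun ξ _ => volume_frontier_cell hε ξ

lemma hatOmega_subset (ε : ℝ) (Ω : Set (Fin N → ℝ)) :
    hatOmega ε Ω ⊆ ⋃ ξ ∈ bigXi ε Ω, closure (cellOf ε ξ) := interior_subset

lemma cell_subset_hatOmega {ε : ℝ} {Ω : Set (Fin N → ℝ)} {ξ : Fin N → ℤ}
    (hξ : ξ ∈ bigXi ε Ω) : cellOf ε ξ ⊆ hatOmega ε Ω :=
  interior_maximal
    ((subset_closure).trans (Set.subset_biUnion_of_mem (u := fun ξ => closure (cellOf ε ξ)) hξ)) (isOpen_cellOf ε ξ)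

lemma hatOmega_diff_union_null {ε : ℝ} (hε : 0 < ε) (Ω : Set (Fin N → ℝ)) :
    volume (hatOmega ε Ω \ ⋃ ξ ∈ bigXi ε Ω, cellOf ε ξ) = 0 := by
  refine measure_mono_null ?_ (volume_badSet hε Ω)
  intro x ⟨hx, hx'⟩
  obtain ⟨ξ, hξ, hxc⟩ := by simpa using hatOmega_subset ε Ω hx
  exact Set.mem_biUnion hξ ⟨hxc, fun hc => hx' (Set.mem_biUnion hξ hc)⟩

lemma hatOmega_diff_null {ε : ℝ} (hε : 0 < ε) (Ω : Set (Fin N → ℝ)) :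
    volume (hatOmega ε Ω \ Ω) = 0 := by
  refine measure_mono_null ?_ (volume_badSet hε Ω)
  intro x ⟨hx, hx'⟩
  obtain ⟨ξ, hξ, hxc⟩ := by simpa using hatOmega_subset ε Ω hx
  exact Set.mem_biUnion hξ ⟨hxc, fun hc => hx' (hξ hc)⟩

lemma B_zero {B : ℝ → ℝ} (hB : IsYoung B) : B 0 = 0 := by
  have h1 : Tendsto B (𝓝[>] (0:ℝ)) (𝓝 (B 0)) :=
    ((hB.1 0 Set.self_mem_Ici).mono_left
      (nhdsWithin_mono 0 Set.Ioi_subset_Ici_self))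
  have h2 : Tendsto B (𝓝[>] (0:ℝ)) (𝓝 0) := by
    have ht : Tendsto (fun t : ℝ => (B t / t) * t) (𝓝[>] (0:ℝ)) (𝓝 0) := by
      simpa using hB.2.2.2.2.1.mul (tendsto_id.mono_left nhdsWithin_le_nhds)
    refine ht.congr' ?_
    filter_upwards [self_mem_nhdsWithin] with t (ht : t ∈ Set.Ioi 0)
    exact div_mul_cancel₀ (B t) (ne_of_gt ht)
  exact tendsto_nhds_unique h1 h2

lemma B_abs_nonneg {B : ℝ → ℝ} (hB : IsYoung B) (t : ℝ) : 0 ≤ B |t| :=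
  hB.2.2.1 _ (abs_nonneg t)

lemma measurable_B_abs {B : ℝ → ℝ} (hB : IsYoung B) {α : Type*} [MeasurableSpace α]
    {f : α → ℝ} (hf : Measurable f) : Measurable fun x => B |f x| := by
  have hc : Continuous ((Set.Ici (0:ℝ)).restrict B) :=
    continuousOn_iff_continuous_restrict.mp hB.1
  have : (fun x => B |f x|)
      = fun x => (Set.Ici (0:ℝ)).restrict B ⟨|f x|, Set.mem_Ici.2 (abs_nonneg _)⟩ := rfl
  rw [this]
  exact hc.measurable.comp (hf.abs.subtype_mk)

lemma volume_unitCell (N : ℕ) : volume (unitCell N) = 1 := by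
  rw [unitCell, volume_pi_pi]
  simp [Real.volume_Ioo]

end UCIAux

namespace UCIAux

open scoped ENNReal

variable {N : ℕ}

lemma map_affine (c : Fin N → ℝ) {ε : ℝ} (hε : 0 < ε) :
    Measure.map (fun y : Fin N → ℝ => c + ε • y) volume
      = (ENNReal.ofReal (ε ^ N))⁻¹ • volume := by
  have hcomp : (fun y : Fin N → ℝ => c + ε • y)
      = (fun z : Fin N → ℝ => c + z) ∘ (fun y : Fin N → ℝ => ε • y) := rfl
  rw [hcomp, ← Measure.map_map (continuous_add_left c).measurable
      (continuous_const_smul ε).measurable,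
    Measure.map_addHaar_smul volume (ne_of_gt hε), Measure.map_smul,
    Measure.IsAddLeftInvariant.map_add_left_eq_self (μ := (volume : Measure (Fin N → ℝ))) c]
  congr 1
  rw [Module.finrank_fin_fun, abs_of_nonneg (by positivity : (0:ℝ) ≤ (ε ^ N)⁻¹),
    ENNReal.ofReal_inv_of_pos (by positivity)]

lemma preimage_affine_cell {ε : ℝ} (hε : 0 < ε) (ξ : Fin N → ℤ) :
    (fun y : Fin N → ℝ => (fun i => ε * (ξ i : ℝ)) + ε • y) ⁻¹' cellOf ε ξ
      = unitCell N := by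
  ext y
  simp only [cellOf, unitCell, Set.mem_preimage, Set.mem_setOf_eq, Set.mem_pi, Set.mem_univ,
    forall_true_left, Pi.add_apply, Pi.smul_apply, smul_eq_mul, Set.mem_Ioo, true_implies]
  refine forall_congr' fun i => ?_
  rw [mul_add, mul_one, lt_add_iff_pos_right, add_lt_add_iff_left,
    mul_pos_iff_of_pos_left hε, mul_lt_iff_lt_one_right hε]

lemma lintegral_cell_eq {ε : ℝ} (hε : 0 < ε) (ξ : Fin N → ℤ) {h : (Fin N → ℝ) → ℝ≥0∞}
    (hh : Measurable h) :
    ∫⁻ y in unitCell N, h ((fun i => ε * (ξ i : ℝ)) + ε • y)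
      = (ENNReal.ofReal (ε ^ N))⁻¹ * ∫⁻ z in cellOf ε ξ, h z := by
  set c : Fin N → ℝ := fun i => ε * (ξ i : ℝ) with hc
  have hT : Measurable fun y : Fin N → ℝ => c + ε • y :=
    (continuous_const.add (continuous_const_smul ε)).measurable
  rw [← preimage_affine_cell hε ξ, ← lintegral_map hh hT,
    ← Measure.restrict_map hT (measurableSet_cellOf ε ξ), map_affine c hε,
    Measure.restrict_smul, lintegral_smul_measure, smul_eq_mul]

end UCIAux

namespace UCIAux

open scoped ENNReal

variable {N : ℕ}

lemma key_lintegral {B : ℝ → ℝ} (hB : IsYoung B) {ε : ℝ} (hε : 0 < ε)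
    (Ω : Set (Fin N → ℝ)) {f : (Fin N → ℝ) → ℝ} (hf : Measurable f) :
    ∫⁻ p in Ω ×ˢ unitCell N, ENNReal.ofReal (B |unfold ε Ω f p.1 p.2|)
      = ∫⁻ x in hatOmega ε Ω, ENNReal.ofReal (B |f x|) := by
  classical
  set h : (Fin N → ℝ) → ℝ≥0∞ := fun x => ENNReal.ofReal (B |f x|) with hh_def
  have hh : Measurable h := (measurable_B_abs hB hf).ennreal_ofReal
  set g : ((Fin N → ℝ) × (Fin N → ℝ)) → (Fin N → ℝ) :=
    fun p => fun i => ε * ((⌊p.1 i / ε⌋ : ℝ) + p.2 i) with hg_def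
  have hΩhat : MeasurableSet (hatOmega ε Ω) := isOpen_interior.measurableSet
  have hg : Measurable g := by
    refine measurable_pi_lambda _ fun i => Measurable.const_mul (Measurable.fun_add ?_
      ((measurable_pi_apply (X := fun _ => ℝ) i).comp measurable_snd)) ε
    have h1 : Measurable fun p : (Fin N → ℝ) × (Fin N → ℝ) => ⌊p.1 i / ε⌋ :=
      (((measurable_pi_apply (X := fun _ => ℝ) i).comp measurable_fst).div_const ε).floor
    exact (measurable_from_top (f := (Int.cast : ℤ → ℝ))).comp h1
  have hGeq : (fun p : (Fin N → ℝ) × (Fin N → ℝ) =>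
        ENNReal.ofReal (B |unfold ε Ω f p.1 p.2|))
      = fun p => if p.1 ∈ hatOmega ε Ω then h (g p) else 0 := by
    funext p
    by_cases hp : p.1 ∈ hatOmega ε Ω <;>
      simp [unfold, hp, hh_def, hg_def, abs_zero, B_zero hB]
  rw [hGeq, Measure.volume_eq_prod, ← Measure.prod_restrict]
  have hGmeas : Measurable fun p : (Fin N → ℝ) × (Fin N → ℝ) =>
      if p.1 ∈ hatOmega ε Ω then h (g p) else 0 := by
    refine Measurable.ite ?_ (hh.comp hg) measurable_const
    exact measurable_fst hΩhat
  rw [MeasureTheory.lintegral_prod _ hGmeas.aemeasurable]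
  set F : (Fin N → ℝ) → ℝ≥0∞ := fun x => ∫⁻ y in unitCell N, h (g (x, y)) with hF_def
  have hinner : (fun x => ∫⁻ y, (if x ∈ hatOmega ε Ω then h (g (x, y)) else 0)
        ∂(volume.restrict (unitCell N)))
      = fun x => Set.indicator (hatOmega ε Ω) F x := by
    funext x
    by_cases hx : x ∈ hatOmega ε Ω <;> simp [hx, hF_def]
  rw [hinner, lintegral_indicator hΩhat, Measure.restrict_restrict hΩhat]
  set U : Set (Fin N → ℝ) := ⋃ ξ ∈ bigXi ε Ω, cellOf ε ξ with hU_def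
  have hUsub : U ⊆ hatOmega ε Ω ∩ Ω := by
    intro x hx
    obtain ⟨ξ, hξ, hxc⟩ := Set.mem_iUnion₂.1 hx
    exact ⟨cell_subset_hatOmega hξ hxc, hξ hxc⟩
  have hnull : volume (hatOmega ε Ω \ U) = 0 := by
    rw [hU_def]; exact hatOmega_diff_union_null hε Ω
  have haeU : (hatOmega ε Ω ∩ Ω : Set (Fin N → ℝ)) =ᵐ[volume] U := by
    rw [ae_eq_set]
    constructor
    · exact measure_mono_null (Set.diff_subset_diff_left Set.inter_subset_left) hnull
    · have hem : U \ (hatOmega ε Ω ∩ Ω) = ∅ := Set.diff_eq_empty.2 hUsub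
      simp [hem]
  have haeU' : (hatOmega ε Ω : Set (Fin N → ℝ)) =ᵐ[volume] U := by
    rw [ae_eq_set]
    constructor
    · exact hnull
    · have hem : U \ hatOmega ε Ω = ∅ :=
        Set.diff_eq_empty.2 (hUsub.trans Set.inter_subset_left)
      simp [hem]
  have hUeq : U = ⋃ ξ : bigXi ε Ω, cellOf ε (ξ : Fin N → ℤ) := by
    rw [hU_def]; exact Set.biUnion_eq_iUnion _ _
  have hdisj : Pairwise (Function.onFun Disjoint
      fun ξ : bigXi ε Ω => cellOf ε (ξ : Fin N → ℤ)) :=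
    fun ξ ξ' hne => cells_disjoint hε (fun hc => hne (Subtype.ext hc))
  have hmeascells : ∀ ξ : bigXi ε Ω, MeasurableSet (cellOf ε (ξ : Fin N → ℤ)) :=
    fun ξ => measurableSet_cellOf ε _
  rw [setLIntegral_congr haeU, hUeq, lintegral_iUnion hmeascells hdisj]
  have hterm : ∀ ξ : bigXi ε Ω,
      ∫⁻ x in cellOf ε (ξ : Fin N → ℤ), F x
        = ∫⁻ z in cellOf ε (ξ : Fin N → ℤ), h z := by
    intro ξ
    have hr0 : ENNReal.ofReal (ε ^ N) ≠ 0 :=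
      (ENNReal.ofReal_pos.2 (by positivity)).ne'
    have hrt : ENNReal.ofReal (ε ^ N) ≠ ⊤ := ENNReal.ofReal_ne_top
    have hFx : ∀ x ∈ cellOf ε (ξ : Fin N → ℤ),
        F x = (ENNReal.ofReal (ε ^ N))⁻¹ * ∫⁻ z in cellOf ε (ξ : Fin N → ℤ), h z := by
      intro x hx
      have : F x = ∫⁻ y in unitCell N,
          h ((fun i => ε * ((ξ : Fin N → ℤ) i : ℝ)) + ε • y) := by
        refine lintegral_congr fun y => ?_
        congr 1
        funext i
        have hfl := floor_eq_of_mem_cell hε hx i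
        simp only [hg_def, hfl, Pi.add_apply, Pi.smul_apply, smul_eq_mul]
        ring
      rw [this, lintegral_cell_eq hε _ hh]
    calc ∫⁻ x in cellOf ε (ξ : Fin N → ℤ), F x
        = ∫⁻ _ in cellOf ε (ξ : Fin N → ℤ),
            ((ENNReal.ofReal (ε ^ N))⁻¹ * ∫⁻ z in cellOf ε (ξ : Fin N → ℤ), h z) := by
          exact setLIntegral_congr_fun_ae (measurableSet_cellOf ε _)
            (ae_of_all _ fun x hx => hFx x hx)
      _ = ∫⁻ z in cellOf ε (ξ : Fin N → ℤ), h z := by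
          rw [setLIntegral_const, volume_cellOf hε,
            mul_comm (ENNReal.ofReal (ε ^ N))⁻¹, mul_assoc,
            ENNReal.inv_mul_cancel hr0 hrt, mul_one]
  rw [tsum_congr hterm, ← lintegral_iUnion hmeascells hdisj, ← hUeq,
    ← setLIntegral_congr haeU']

end UCIAux

namespace UCIAux

variable {N : ℕ}

lemma measurable_unfold {ε : ℝ} (Ω : Set (Fin N → ℝ)) {f : (Fin N → ℝ) → ℝ}
    (hf : Measurable f) :
    Measurable fun p : (Fin N → ℝ) × (Fin N → ℝ) => unfold ε Ω f p.1 p.2 := by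
  have hg : Measurable fun p : (Fin N → ℝ) × (Fin N → ℝ) =>
      (fun i => ε * ((⌊p.1 i / ε⌋ : ℝ) + p.2 i)) := by
    refine measurable_pi_lambda _ fun i => Measurable.const_mul (Measurable.fun_add ?_
      ((measurable_pi_apply (X := fun _ => ℝ) i).comp measurable_snd)) ε
    exact (measurable_from_top (f := (Int.cast : ℤ → ℝ))).comp
      (((measurable_pi_apply (X := fun _ => ℝ) i).comp measurable_fst).div_const ε).floor
  simp only [unfold]
  exact Measurable.ite (measurable_fst isOpen_interior.measurableSet)
    (hf.comp hg) measurable_const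

end UCIAux

open UCIAux in
/-- Unfolding criterion for integrals (u.c.i.) in the Orlicz setting: if the modulars of
`w_ε` on the boundary layers `Λ_ε` vanish, then the unfolded modular converges to the
original one. -/
theorem uci_orlicz (N : ℕ) (B : ℝ → ℝ) (hB : IsYoung B)
    (Ω : Set (Fin N → ℝ)) (hΩopen : IsOpen Ω) (hΩbdd : Bornology.IsBounded Ω)
    (w : ℝ → (Fin N → ℝ) → ℝ) (hmeas : ∀ ε : ℝ, Measurable (w ε))
    (hmem : ∀ ε : ℝ, 0 < ε → MeasureTheory.IntegrableOn (fun x => B |w ε x|) Ω)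
    (h0 : Tendsto (fun ε : ℝ => ∫ x in lamEps ε Ω, B |w ε x|) (𝓝[>] (0:ℝ)) (𝓝 0)) :
    Tendsto (fun ε : ℝ =>
        (∫ x in Ω, B |w ε x|) -
          (1 / (MeasureTheory.volume (unitCell N)).toReal) *
            ∫ p in Ω ×ˢ unitCell N, B |unfold ε Ω (w ε) p.1 p.2|)
      (𝓝[>] (0:ℝ)) (𝓝 0) := by
  have hvol : (volume (unitCell N)).toReal = 1 := by
    rw [UCIAux.volume_unitCell]; simp
  refine Tendsto.congr' ?_ h0
  filter_upwards [self_mem_nhdsWithin] with ε (hε : ε ∈ Set.Ioi 0)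
  replace hε : 0 < ε := hε
  have hΩhat : MeasurableSet (hatOmega ε Ω) := isOpen_interior.measurableSet
  have hint : IntegrableOn (fun x => B |w ε x|) Ω := hmem ε hε
  have h1 : ∫ p in Ω ×ˢ unitCell N, B |unfold ε Ω (w ε) p.1 p.2|
      = (∫⁻ x in hatOmega ε Ω, ENNReal.ofReal (B |w ε x|)).toReal := by
    rw [integral_eq_lintegral_of_nonneg_ae (ae_of_all _ fun p => B_abs_nonneg hB _)
      ((measurable_B_abs hB (measurable_unfold Ω (hmeas ε))).aestronglyMeasurable),
      key_lintegral hB hε Ω (hmeas ε)]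
  have h2 : ∫ x in Ω ∩ hatOmega ε Ω, B |w ε x|
      = (∫⁻ x in hatOmega ε Ω, ENNReal.ofReal (B |w ε x|)).toReal := by
    rw [integral_eq_lintegral_of_nonneg_ae (ae_of_all _ fun x => B_abs_nonneg hB _)
      ((measurable_B_abs hB (hmeas ε)).aestronglyMeasurable)]
    congr 1
    refine setLIntegral_congr ?_
    rw [ae_eq_set]
    constructor
    · simp [Set.diff_eq_empty.2 Set.inter_subset_right]
    · refine measure_mono_null ?_ (hatOmega_diff_null hε Ω)
      intro x hx
      exact ⟨hx.1, fun hc => hx.2 ⟨hc, hx.1⟩⟩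
  have hsplit : (∫ x in Ω ∩ hatOmega ε Ω, B |w ε x|)
      + ∫ x in Ω \ hatOmega ε Ω, B |w ε x| = ∫ x in Ω, B |w ε x| :=
    integral_inter_add_diff hΩhat hint
  show ∫ x in lamEps ε Ω, B |w ε x| = _
  rw [hvol, lamEps, h1, ← hsplit, h2]
  ring
end
end
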